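/- Fix l, n ∈ ℕ with l, n ≥ 1 and M > 0, and set I = [-M, M]. Define f(λ) = (1, λ^l, 0) ∈ ℝ³ and the diagonal matrix a(λ) = diag(0, 0, |λ|^n). Then there exist constants C > 0 and δ₀ > 0 such that for every δ ∈ (0, δ₀) and every unit vector ξ = (ξ₀, ξ₁, ξ₂) ∈ ℝ³ (|ξ| = 1), the Lebesgue measure of the set {λ ∈ I : (ξ₀ + λ^l ξ₁)² + |λ|^n ξ₂² ≤ δ} is at most C δ^α, where α = min{1/(2l), 1/n}. -/

import Mathlib

open MeasureTheory

lemma half_measure (l : ℕ) (hl : l ≠ 0) (c ε : ℝ) (hε : 0 ≤ ε) :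
    volume {t : ℝ | 0 ≤ t ∧ |t ^ l - c| ≤ ε} ≤
      ENNReal.ofReal ((2 * ε) ^ ((l : ℝ)⁻¹)) := by
  set A : ℝ := (max (c - ε) 0) ^ ((l : ℝ)⁻¹) with hA
  set B : ℝ := (max (c + ε) 0) ^ ((l : ℝ)⁻¹) with hB
  have hA0 : 0 ≤ A := Real.rpow_nonneg (le_max_right _ _) _
  have hB0 : 0 ≤ B := Real.rpow_nonneg (le_max_right _ _) _
  have hAB : A ≤ B :=
    Real.rpow_le_rpow (le_max_right _ _)
      (max_le_max (by linarith) le_rfl) (by positivity)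
  have hsub : {t : ℝ | 0 ≤ t ∧ |t ^ l - c| ≤ ε} ⊆ Set.Icc A B := by
    rintro t ⟨ht0, ht⟩
    rw [abs_le] at ht
    have h1 : max (c - ε) 0 ≤ t ^ l := max_le (by linarith [ht.1]) (pow_nonneg ht0 l)
    have h2 : t ^ l ≤ max (c + ε) 0 := le_max_of_le_left (by linarith [ht.2])
    constructor
    · calc A ≤ (t ^ l) ^ ((l : ℝ)⁻¹) :=
            Real.rpow_le_rpow (le_max_right _ _) h1 (by positivity)
        _ = t := Real.pow_rpow_inv_natCast ht0 hl
    · calc t = (t ^ l) ^ ((l : ℝ)⁻¹) := (Real.pow_rpow_inv_natCast ht0 hl).symm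
        _ ≤ B := Real.rpow_le_rpow (pow_nonneg ht0 l) h2 (by positivity)
  refine le_trans (measure_mono hsub) ?_
  rw [Real.volume_Icc]
  apply ENNReal.ofReal_le_ofReal
  have hAl : A ^ l = max (c - ε) 0 := Real.rpow_inv_natCast_pow (le_max_right _ _) hl
  have hBl : B ^ l = max (c + ε) 0 := Real.rpow_inv_natCast_pow (le_max_right _ _) hl
  have hmax : B ^ l - A ^ l ≤ 2 * ε := by
    rw [hAl, hBl]
    have := abs_max_sub_max_le_abs (c + ε) (c - ε) 0
    rw [abs_le] at this
    have h2 : |c + ε - (c - ε)| = 2 * ε := by rw [abs_of_nonneg (by linarith)]; ring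
    linarith [this.2]
  have hpow : (B - A) ^ l ≤ 2 * ε := by
    have h := pow_add_pow_le (sub_nonneg.2 hAB) hA0 hl
    rw [sub_add_cancel] at h
    linarith
  calc B - A = ((B - A) ^ l) ^ ((l : ℝ)⁻¹) :=
        (Real.pow_rpow_inv_natCast (by linarith) hl).symm
    _ ≤ (2 * ε) ^ ((l : ℝ)⁻¹) :=
        Real.rpow_le_rpow (pow_nonneg (by linarith) l) hpow (by positivity)

lemma full_measure (l : ℕ) (hl : l ≠ 0) (c ε : ℝ) (hε : 0 ≤ ε) :
    volume {t : ℝ | |t ^ l - c| ≤ ε} ≤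
      ENNReal.ofReal (2 * (2 * ε) ^ ((l : ℝ)⁻¹)) := by
  have hsub : {t : ℝ | |t ^ l - c| ≤ ε} ⊆
      {t : ℝ | 0 ≤ t ∧ |t ^ l - c| ≤ ε} ∪
      (Neg.neg ⁻¹' {t : ℝ | 0 ≤ t ∧ |t ^ l - (-1 : ℝ) ^ l * c| ≤ ε}) := by
    intro t ht
    rcases le_total 0 t with h0 | h0
    · exact Or.inl ⟨h0, ht⟩
    · refine Or.inr ⟨by simpa using h0, ?_⟩
      have : (-t) ^ l - (-1 : ℝ) ^ l * c = (-1 : ℝ) ^ l * (t ^ l - c) := by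
        rw [neg_pow]; ring
      rw [Set.mem_setOf_eq] at ht
      simpa [this, abs_mul] using ht
  refine le_trans (measure_mono hsub) (le_trans (measure_union_le _ _) ?_)
  rw [Measure.measure_preimage_neg]
  have h1 := half_measure l hl c ε hε
  have h2 := half_measure l hl ((-1 : ℝ) ^ l * c) ε hε
  calc volume {t : ℝ | 0 ≤ t ∧ |t ^ l - c| ≤ ε} +
        volume {t : ℝ | 0 ≤ t ∧ |t ^ l - (-1 : ℝ) ^ l * c| ≤ ε}
      ≤ ENNReal.ofReal ((2*ε) ^ ((l:ℝ)⁻¹)) + ENNReal.ofReal ((2*ε) ^ ((l:ℝ)⁻¹)) :=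
        add_le_add h1 h2
    _ ≤ ENNReal.ofReal (2 * (2 * ε) ^ ((l : ℝ)⁻¹)) := by
        rw [← ENNReal.ofReal_add (by positivity) (by positivity)]
        apply ENNReal.ofReal_le_ofReal; ring_nf; rfl

set_option maxHeartbeats 1000000 in
/-- Non-degeneracy estimate for the symbol of the 2D convection-diffusion equation:
for `f(λ) = (1, λ^l, 0)` and `a(λ) = diag(0,0,|λ|^n)`, the measure of
`{λ ∈ [-M,M] : (ξ₀ + λ^l ξ₁)² + |λ|^n ξ₂² ≤ δ}` is `≲ δ^{min(1/(2l), 1/n)}`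
uniformly over unit vectors `(ξ₀,ξ₁,ξ₂)`. -/
theorem stmt_3 (l n : ℕ) (hl : 1 ≤ l) (hn : 1 ≤ n) (M : ℝ) (hM : 0 < M) :
    ∃ C > 0, ∃ δ₀ > 0, ∀ δ : ℝ, 0 < δ → δ < δ₀ →
      ∀ ξ₀ ξ₁ ξ₂ : ℝ, ξ₀ ^ 2 + ξ₁ ^ 2 + ξ₂ ^ 2 = 1 →
        volume {t : ℝ | t ∈ Set.Icc (-M) M ∧
            (ξ₀ + t ^ l * ξ₁) ^ 2 + |t| ^ n * ξ₂ ^ 2 ≤ δ} ≤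
          ENNReal.ofReal (C * δ ^ (min (1 / (2 * (l : ℝ))) (1 / (n : ℝ)))) := by
  have hl' : l ≠ 0 := Nat.one_le_iff_ne_zero.mp hl
  have hn' : n ≠ 0 := Nat.one_le_iff_ne_zero.mp hn
  have hlR : (1 : ℝ) ≤ (l : ℝ) := by exact_mod_cast hl
  have hnR : (1 : ℝ) ≤ (n : ℝ) := by exact_mod_cast hn
  set α : ℝ := min (1 / (2 * (l : ℝ))) (1 / (n : ℝ)) with hαdef
  have hα1 : α ≤ 1 / (2 * (l : ℝ)) := min_le_left _ _
  have hα2 : α ≤ 1 / (n : ℝ) := min_le_right _ _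
  set η : ℝ := min (1/2 : ℝ) (1 / (4 * (1 + M) ^ l)) with hηdef
  have hη0 : 0 < η := lt_min (by norm_num) (by positivity)
  have hη2 : η ≤ 1/2 := min_le_left _ _
  refine ⟨6 + 4 / η, by positivity, 1/16, by norm_num, ?_⟩
  intro δ hδ hδ16 ξ₀ ξ₁ ξ₂ hξ
  have hδ1 : δ ≤ 1 := by linarith
  have hαpos : 0 ≤ δ ^ α := Real.rpow_nonneg hδ.le α
  by_cases h2 : 1/3 ≤ ξ₂ ^ 2
  · -- case ξ₂² ≥ 1/3
    have hsub : {t : ℝ | t ∈ Set.Icc (-M) M ∧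
          (ξ₀ + t ^ l * ξ₁) ^ 2 + |t| ^ n * ξ₂ ^ 2 ≤ δ} ⊆
        Set.Icc (-((3*δ) ^ ((n:ℝ)⁻¹))) ((3*δ) ^ ((n:ℝ)⁻¹)) := by
      rintro t ⟨_, ht⟩
      have hpn : (0:ℝ) ≤ |t| ^ n := pow_nonneg (abs_nonneg t) n
      have h3 : |t| ^ n ≤ 3 * δ := by
        nlinarith [sq_nonneg (ξ₀ + t ^ l * ξ₁),
          mul_nonneg hpn (by linarith : (0:ℝ) ≤ ξ₂ ^ 2 - 1/3)]
      have habs : |t| ≤ (3*δ) ^ ((n:ℝ)⁻¹) := by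
        calc |t| = (|t| ^ n) ^ ((n:ℝ)⁻¹) :=
              (Real.pow_rpow_inv_natCast (abs_nonneg t) hn').symm
          _ ≤ (3*δ) ^ ((n:ℝ)⁻¹) := Real.rpow_le_rpow hpn h3 (by positivity)
      exact abs_le.mp habs
    refine le_trans (measure_mono hsub) ?_
    rw [Real.volume_Icc]
    apply ENNReal.ofReal_le_ofReal
    have key : (3*δ) ^ ((n:ℝ)⁻¹) ≤ 3 * δ ^ α := by
      rw [Real.mul_rpow (by norm_num) hδ.le]
      have e1 : (3:ℝ) ^ ((n:ℝ)⁻¹) ≤ 3 := by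
        calc (3:ℝ) ^ ((n:ℝ)⁻¹) ≤ (3:ℝ) ^ (1:ℝ) :=
              Real.rpow_le_rpow_of_exponent_le (by norm_num)
                (by rw [inv_le_one_iff₀]; right; exact hnR)
          _ = 3 := Real.rpow_one 3
      have e2 : δ ^ ((n:ℝ)⁻¹) ≤ δ ^ α :=
        Real.rpow_le_rpow_of_exponent_ge hδ hδ1 (by rw [← one_div]; exact hα2)
      exact mul_le_mul e1 e2 (Real.rpow_nonneg hδ.le _) (by norm_num)
    have h4η : (0:ℝ) ≤ 4 / η := by positivity
    have hrw : (6 + 4/η) * δ ^ α = 2 * (3 * δ ^ α) + (4/η) * δ ^ α := by ring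
    rw [hrw]
    linarith [key, mul_nonneg h4η hαpos]
  · by_cases h1 : η ≤ |ξ₁|
    · -- case |ξ₁| ≥ η
      have hξ1 : ξ₁ ≠ 0 := by
        intro h; rw [h, abs_zero] at h1; linarith
      set ε' : ℝ := Real.sqrt δ / η with hε'def
      have hε'0 : 0 ≤ ε' := by positivity
      have hsub : {t : ℝ | t ∈ Set.Icc (-M) M ∧
            (ξ₀ + t ^ l * ξ₁) ^ 2 + |t| ^ n * ξ₂ ^ 2 ≤ δ} ⊆
          {t : ℝ | |t ^ l - (-ξ₀ / ξ₁)| ≤ ε'} := by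
        rintro t ⟨_, ht⟩
        have h4 : (ξ₀ + t ^ l * ξ₁) ^ 2 ≤ δ := by
          nlinarith [mul_nonneg (pow_nonneg (abs_nonneg t) n) (sq_nonneg ξ₂)]
        have h5 : |ξ₀ + t ^ l * ξ₁| ≤ Real.sqrt δ := Real.abs_le_sqrt h4
        have heq : t ^ l - (-ξ₀ / ξ₁) = (ξ₀ + t ^ l * ξ₁) / ξ₁ := by
          field_simp; ring
        show |t ^ l - (-ξ₀ / ξ₁)| ≤ ε'
        rw [heq, abs_div]
        exact div_le_div₀ (Real.sqrt_nonneg δ) h5 hη0 h1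
      refine le_trans (measure_mono hsub)
        (le_trans (full_measure l hl' (-ξ₀ / ξ₁) ε' hε'0) ?_)
      apply ENNReal.ofReal_le_ofReal
      have key : (2 * ε') ^ ((l:ℝ)⁻¹) ≤ (2/η) * δ ^ α := by
        have heq : 2 * ε' = (2/η) * Real.sqrt δ := by
          rw [hε'def]; ring
        rw [heq, Real.mul_rpow (by positivity) (Real.sqrt_nonneg δ)]
        have e1 : (2/η) ^ ((l:ℝ)⁻¹) ≤ 2/η := by
          have h4 : (1:ℝ) ≤ 2/η := by
            rw [le_div_iff₀ hη0]; linarith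
          calc (2/η) ^ ((l:ℝ)⁻¹) ≤ (2/η) ^ (1:ℝ) :=
                Real.rpow_le_rpow_of_exponent_le h4
                  (by rw [inv_le_one_iff₀]; right; exact hlR)
            _ = 2/η := Real.rpow_one _
        have e2 : (Real.sqrt δ) ^ ((l:ℝ)⁻¹) ≤ δ ^ α := by
          rw [Real.sqrt_eq_rpow, ← Real.rpow_mul hδ.le]
          apply Real.rpow_le_rpow_of_exponent_ge hδ hδ1
          calc α ≤ 1 / (2 * (l:ℝ)) := hα1
            _ = 1/2 * ((l:ℝ)⁻¹) := by rw [one_div, mul_inv]; norm_num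
        exact mul_le_mul e1 e2 (Real.rpow_nonneg (Real.sqrt_nonneg δ) _)
          (by positivity)
      have hrw : (6 + 4/η) * δ ^ α = 2 * (2/η * δ ^ α) + 6 * δ ^ α := by ring
      rw [hrw]
      linarith [key, hαpos]
    · -- case |ξ₁| < η : empty set
      push_neg at h1
      push_neg at h2
      have hempty : {t : ℝ | t ∈ Set.Icc (-M) M ∧
            (ξ₀ + t ^ l * ξ₁) ^ 2 + |t| ^ n * ξ₂ ^ 2 ≤ δ} = ∅ := by
        ext t
        simp only [Set.mem_setOf_eq, Set.mem_empty_iff_false, iff_false, not_and]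
        intro htI ht
        have hξ1' : |ξ₁| ≤ 1 / (4 * (1 + M) ^ l) :=
          le_trans h1.le (min_le_right _ _)
        have ht' : |t| ≤ M := abs_le.mpr ⟨htI.1, htI.2⟩
        have htl : |t ^ l| ≤ (1 + M) ^ l := by
          rw [abs_pow]
          exact pow_le_pow_left₀ (abs_nonneg t) (by linarith) l
        have hb : |t ^ l * ξ₁| ≤ 1/4 := by
          rw [abs_mul]
          calc |t ^ l| * |ξ₁| ≤ (1 + M) ^ l * (1 / (4 * (1 + M) ^ l)) :=
                mul_le_mul htl hξ1' (abs_nonneg _) (by positivity)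
            _ = 1/4 := by field_simp
        have hξ1sq : ξ₁ ^ 2 ≤ 1/4 := by
          have h12 : |ξ₁| ≤ 1/2 := by linarith
          have := sq_abs ξ₁
          nlinarith [abs_nonneg ξ₁]
        have hξ0 : 1/4 ≤ ξ₀ ^ 2 := by linarith
        have h0 : 1/2 ≤ |ξ₀| := by
          by_contra hc
          push_neg at hc
          have := sq_abs ξ₀
          nlinarith [abs_nonneg ξ₀]
        have hlow : 1/4 ≤ |ξ₀ + t ^ l * ξ₁| := by
          have habs := abs_add_le (ξ₀ + t ^ l * ξ₁) (-(t ^ l * ξ₁))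
          rw [add_neg_cancel_right, abs_neg] at habs
          linarith
        have hsq : 1/16 ≤ (ξ₀ + t ^ l * ξ₁) ^ 2 := by
          have h := sq_abs (ξ₀ + t ^ l * ξ₁)
          nlinarith [abs_nonneg (ξ₀ + t ^ l * ξ₁)]
        linarith [mul_nonneg (pow_nonneg (abs_nonneg t) n) (sq_nonneg ξ₂)]
      rw [hempty, measure_empty]
      exact zero_le
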